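/- Let R be a ring and n a positive integer. An ideal J of the full matrix ring M_n(R) is a z°-ideal if and only if J = M_n(I) for some z°_{n²}-ideal I of R. -/

import Mathlib

open TwoSidedIdeal

/-- Left annihilator of a set: `l(S) = {x | ∀ s ∈ S, x*s = 0}`. -/
def lAnn (R : Type*) [Ring R] (S : Set R) : Set R := {x | ∀ s ∈ S, x * s = 0}

/-- Right annihilator of a set: `r(S) = {x | ∀ s ∈ S, s*x = 0}`. -/
def rAnn (R : Type*) [Ring R] (S : Set R) : Set R := {x | ∀ s ∈ S, s * x = 0}

/-- A ring is semiprime if `I² = 0` implies `I = 0` for every two-sided ideal `I`. -/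
def IsSemiprimeRing (R : Type*) [Ring R] : Prop :=
  ∀ I : TwoSidedIdeal R, (∀ a ∈ I, ∀ b ∈ I, a * b = 0) → I = ⊥

/-- A two-sided ideal `P` is prime if it is proper and `IJ ⊆ P` implies `I ⊆ P` or `J ⊆ P`. -/
def IsPrimeTSI {R : Type*} [Ring R] (P : TwoSidedIdeal R) : Prop :=
  P ≠ ⊤ ∧ ∀ I J : TwoSidedIdeal R, (∀ a ∈ I, ∀ b ∈ J, a * b ∈ P) → I ≤ P ∨ J ≤ P

/-- A minimal prime ideal: a prime two-sided ideal minimal among primes. -/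
def IsMinPrime {R : Type*} [Ring R] (P : TwoSidedIdeal R) : Prop :=
  IsPrimeTSI P ∧ ∀ Q : TwoSidedIdeal R, IsPrimeTSI Q → Q ≤ P → Q = P

/-- `Pmin R B` is the intersection of all minimal prime ideals of `R` containing the set `B`
(equal to all of `R` if there are none). -/
def Pmin (R : Type*) [Ring R] (B : Set R) : Set R :=
  ⋂ P ∈ {P : TwoSidedIdeal R | IsMinPrime P ∧ B ⊆ (P : Set R)}, (P : Set R)

/-- `Pa a` : the intersection of all minimal prime ideals containing `a`. -/
def Pa {R : Type*} [Ring R] (a : R) : Set R := Pmin R {a}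

/-- An ideal `I` is a z°-ideal if `P_a ⊆ I` for every `a ∈ I`. -/
def IsZoIdeal {R : Type*} [Ring R] (I : TwoSidedIdeal R) : Prop :=
  ∀ a ∈ I, Pa a ⊆ (I : Set R)

/-- An ideal `I` is a right d-ideal if `r(l(RaR)) ⊆ I` for every `a ∈ I`. -/
def IsRightDIdeal {R : Type*} [Ring R] (I : TwoSidedIdeal R) : Prop :=
  ∀ a ∈ I, rAnn R (lAnn R (span {a} : Set R)) ⊆ (I : Set R)

/-- An ideal `I` is a right annihilator ideal if `I = r(l(I))`. -/
def IsRightAnnIdeal {R : Type*} [Ring R] (I : TwoSidedIdeal R) : Prop :=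
  (I : Set R) = rAnn R (lAnn R (I : Set R))

/-- An ideal `I` is a `z°ₖ`-ideal if `P_F ⊆ I` for every finite subset `F ⊆ I` with at
most `k` elements. -/
def IsZnIdeal {R : Type*} [Ring R] (k : ℕ) (I : TwoSidedIdeal R) : Prop :=
  ∀ F : Finset R, (F : Set R) ⊆ (I : Set R) → F.card ≤ k → Pmin R (F : Set R) ⊆ (I : Set R)

section AuxLemmas

open Matrix TwoSidedIdeal

variable {R : Type*} [Ring R] {m : Type*} [Fintype m] [DecidableEq m]

lemma Pmin_mono {B B' : Set R} (h : B ⊆ B') : Pmin R B ⊆ Pmin R B' := by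
  intro x hx
  simp only [Pmin, Set.mem_iInter, Set.mem_setOf_eq] at hx ⊢
  intro P hP
  exact hx P ⟨hP.1, h.trans hP.2⟩

lemma mem_Pmin_iff {B : Set R} {x : R} :
    x ∈ Pmin R B ↔ ∀ P : TwoSidedIdeal R, IsMinPrime P → B ⊆ (P : Set R) → x ∈ P := by
  simp only [Pmin, Set.mem_iInter, Set.mem_setOf_eq, SetLike.mem_coe, and_imp]

lemma stdBasisMatrix_mem_matricesOver {I : TwoSidedIdeal R} {a : R} (ha : a ∈ I) (k l : m) :
    Matrix.single k l a ∈ I.matrix m := by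
  rw [TwoSidedIdeal.mem_matrix]
  intro i j
  simp only [Matrix.single, Matrix.of_apply]
  split
  · exact ha
  · exact I.zero_mem

lemma matricesOver_le_iff [Nonempty m] {I P : TwoSidedIdeal R} :
    I.matrix m ≤ P.matrix m ↔ I ≤ P := by
  constructor
  · intro h a ha
    obtain ⟨i₀⟩ := ‹Nonempty m›
    have h1 : (Matrix.of fun _ _ => a) ∈ I.matrix m := by
      rw [TwoSidedIdeal.mem_matrix]; intro i j; exact ha
    have := h h1
    rw [TwoSidedIdeal.mem_matrix] at this
    exact this i₀ i₀
  · exact fun h => TwoSidedIdeal.matrix_monotone m h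

lemma matricesOver_inj [Nonempty m] {I P : TwoSidedIdeal R} :
    I.matrix m = P.matrix m → I = P := fun h =>
  le_antisymm (matricesOver_le_iff.mp h.le) (matricesOver_le_iff.mp h.ge)

lemma exists_matricesOver_eq (J : TwoSidedIdeal (Matrix m m R)) [Nonempty m] :
    ∃ I : TwoSidedIdeal R, I.matrix m = J := by
  classical
  obtain ⟨i₀⟩ := ‹Nonempty m›
  exact ⟨(TwoSidedIdeal.equivMatrix).symm J,
    (TwoSidedIdeal.equivMatrix).apply_symm_apply J⟩

lemma isPrime_matricesOver [Nonempty m] {P : TwoSidedIdeal R} :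
    IsPrimeTSI (P.matrix m) ↔ IsPrimeTSI P := by
  classical
  obtain ⟨i₀⟩ := ‹Nonempty m›
  constructor
  · rintro ⟨hne, hpr⟩
    refine ⟨fun h => hne (by rw [h, TwoSidedIdeal.matrix_top]), ?_⟩
    intro I J h
    have := hpr (I.matrix m) (J.matrix m) ?_
    · rcases this with h1 | h1
      · exact Or.inl (matricesOver_le_iff.mp h1)
      · exact Or.inr (matricesOver_le_iff.mp h1)
    · intro A hA B hB
      rw [TwoSidedIdeal.mem_matrix] at hA hB ⊢
      intro i j
      rw [Matrix.mul_apply]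
      exact sum_mem fun k _ => h _ (hA i k) _ (hB k j)
  · rintro ⟨hne, hpr⟩
    refine ⟨?_, ?_⟩
    · intro h
      apply hne
      apply matricesOver_inj (m := m)
      rw [h, TwoSidedIdeal.matrix_top]
    · intro I' J' h
      obtain ⟨I, rfl⟩ := exists_matricesOver_eq I'
      obtain ⟨J, rfl⟩ := exists_matricesOver_eq J'
      have key : ∀ a ∈ I, ∀ b ∈ J, a * b ∈ P := by
        intro a ha b hb
        have := h _ (stdBasisMatrix_mem_matricesOver ha i₀ i₀)
          _ (stdBasisMatrix_mem_matricesOver hb i₀ i₀)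
        rw [Matrix.single_mul_single_same, TwoSidedIdeal.mem_matrix] at this
        have := this i₀ i₀
        rwa [Matrix.single_apply_same] at this
      rcases hpr I J key with h1 | h1
      · exact Or.inl (TwoSidedIdeal.matrix_monotone m h1)
      · exact Or.inr (TwoSidedIdeal.matrix_monotone m h1)

lemma isMinPrime_matricesOver [Nonempty m] {P : TwoSidedIdeal R} :
    IsMinPrime (P.matrix m) ↔ IsMinPrime P := by
  constructor
  · rintro ⟨hp, hmin⟩
    refine ⟨isPrime_matricesOver.mp hp, ?_⟩
    intro Q hQ hQP
    apply matricesOver_inj (m := m)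
    exact hmin _ (isPrime_matricesOver.mpr hQ) (TwoSidedIdeal.matrix_monotone m hQP)
  · rintro ⟨hp, hmin⟩
    refine ⟨isPrime_matricesOver.mpr hp, ?_⟩
    intro Q' hQ' hQP
    obtain ⟨Q, rfl⟩ := exists_matricesOver_eq Q'
    have hQ : IsPrimeTSI Q := isPrime_matricesOver.mp hQ'
    have hle : Q ≤ P := matricesOver_le_iff.mp hQP
    rw [hmin Q hQ hle]

lemma Pmin_matricesOver [Nonempty m] (M : Matrix m m R) :
    Pmin (Matrix m m R) {M} = {N | ∀ i j, N i j ∈ Pmin R {x | ∃ i j, M i j = x}} := by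
  ext N
  simp only [Set.mem_setOf_eq, mem_Pmin_iff, Set.singleton_subset_iff, SetLike.mem_coe]
  constructor
  · intro hN i j P hP hsub
    have hMP : M ∈ P.matrix m := by
      rw [TwoSidedIdeal.mem_matrix]
      intro i' j'
      exact hsub ⟨i', j', rfl⟩
    have := hN (P.matrix m) (isMinPrime_matricesOver.mpr hP) hMP
    rw [TwoSidedIdeal.mem_matrix] at this
    exact this i j
  · intro hN Q' hQ' hMQ'
    obtain ⟨P, rfl⟩ := exists_matricesOver_eq Q'
    have hP : IsMinPrime P := isMinPrime_matricesOver.mp hQ'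
    rw [TwoSidedIdeal.mem_matrix] at hMQ' ⊢
    intro i j
    refine hN i j P hP ?_
    rintro x ⟨i', j', rfl⟩
    exact hMQ' i' j'

end AuxLemmas

/-- Theorem 4.2: an ideal `J` of `Mₙ(R)` is a z°-ideal iff `J = Mₙ(I)` for some
`z°_{n²}`-ideal `I` of `R`. -/
theorem stmt7 (R : Type*) [Ring R] (n : ℕ) (hn : 0 < n)
    (J : TwoSidedIdeal (Matrix (Fin n) (Fin n) R)) :
    IsZoIdeal J ↔ ∃ I : TwoSidedIdeal R, IsZnIdeal (n ^ 2) I ∧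
      (J : Set (Matrix (Fin n) (Fin n) R)) =
        {M : Matrix (Fin n) (Fin n) R | ∀ i j, M i j ∈ I} := by
  classical
  haveI : Nonempty (Fin n) := ⟨⟨0, hn⟩⟩
  have i₀ : Fin n := ⟨0, hn⟩
  constructor
  · intro hz
    obtain ⟨I, rfl⟩ := exists_matricesOver_eq J
    refine ⟨I, ?_, ?_⟩
    · intro F hFI hFcard
      have hcard : Fintype.card (↥(F : Set R)) ≤ Fintype.card (Fin n × Fin n) := by
        simpa [pow_two] using hFcard
      obtain ⟨f⟩ := Function.Embedding.nonempty_of_card_le hcard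
      set g : Fin n × Fin n → R :=
        Function.extend f (fun x => (x : R)) (fun _ => 0) with hg
      set M : Matrix (Fin n) (Fin n) R := Matrix.of fun i j => g (i, j) with hMdef
      have hME : ∀ i j, M i j ∈ I := by
        intro i j
        by_cases h : ∃ x, f x = (i, j)
        · obtain ⟨x, hx⟩ := h
          have : M i j = (x : R) := by
            simp only [hMdef, Matrix.of_apply, hg, ← hx, f.injective.extend_apply]
          rw [this]
          exact hFI x.2
        · have : M i j = 0 := by
            simp only [hMdef, Matrix.of_apply, hg]
            exact Function.extend_apply' _ _ _ h
          rw [this]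
          exact I.zero_mem
      have hMJ : M ∈ I.matrix (Fin n) := by
        rw [TwoSidedIdeal.mem_matrix]; exact hME
      have hPa := hz M hMJ
      simp only [Pa] at hPa
      rw [Pmin_matricesOver] at hPa
      intro a ha
      have hFsub : (F : Set R) ⊆ {x | ∃ i j, M i j = x} := by
        intro x hx
        refine ⟨(f ⟨x, hx⟩).1, (f ⟨x, hx⟩).2, ?_⟩
        simp only [hMdef, Matrix.of_apply, hg]
        rw [show ((f ⟨x, hx⟩).1, (f ⟨x, hx⟩).2) = f ⟨x, hx⟩ from rfl,
          f.injective.extend_apply]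
      have ha' : a ∈ Pmin R {x | ∃ i j, M i j = x} := Pmin_mono hFsub ha
      have hN := hPa (fun (_ _ : Fin n) => ha')
      replace hN : (Matrix.of fun (_ _ : Fin n) => a) ∈ TwoSidedIdeal.matrix (Fin n) I := hN
      rw [TwoSidedIdeal.mem_matrix] at hN
      exact hN i₀ i₀
    · ext N
      simp [TwoSidedIdeal.mem_matrix]
  · rintro ⟨I, hI, hJI⟩
    intro M hM
    have hent : ∀ i j, M i j ∈ I := by
      have h1 : M ∈ (J : Set _) := hM
      rw [hJI] at h1
      exact h1
    simp only [Pa]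
    rw [Pmin_matricesOver]
    intro N hN
    set F : Finset R := Finset.image (fun p : Fin n × Fin n => M p.1 p.2) Finset.univ with hF
    have hFc : (F : Set R) = {x | ∃ i j, M i j = x} := by
      ext x
      simp [hF, eq_comm, Prod.exists]
    have hsub : (F : Set R) ⊆ (I : Set R) := by
      rw [hFc]
      rintro x ⟨i, j, rfl⟩
      exact hent i j
    have hcard : F.card ≤ n ^ 2 :=
      le_trans Finset.card_image_le (by simp [pow_two])
    have hP := hI F hsub hcard
    show N ∈ (J : Set _)
    rw [hJI]
    intro i j
    apply hP
    rw [hFc]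
    exact hN i j
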